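/- Almost sure vanishing of the centred process: in an extended Pólya urn satisfying (A1)–(A4), the centred transformed process satisfies n^{-1}(Y_n − E[Y_n]) → 0 almost surely as n → ∞, where Y_n := C_n U; consequently n^{-1} Y_n → s e_1 almost surely. -/

import Mathlib

open MeasureTheory ProbabilityTheory Filter Matrix
open scoped Topology NNReal
open scoped ENNReal

noncomputable section
set_option linter.unusedSectionVars false
set_option linter.unusedVariables false
set_option maxHeartbeats 1000000

/-- An extended Pólya urn process with `d` colours and replacement matrix `R`, adapted to the
filtration `F` on the probability space `(Ω, μ)`.  `C n` is the (row) vector of ball counts at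
time `n`, `χ (n+1)` is the indicator (canonical basis) row vector of the colour drawn at time
`n+1`, the initial configuration `C 0 = C0` is deterministic with positive total mass, the
dynamics are `C (n+1) = C n + χ (n+1) ⬝ R`, the conditional probability of drawing colour `i`
at time `n+1` given `F n` equals `C n i / t n` where `t n = ∑ i, C n i`, and the urn is
tenable: almost surely all coordinates stay nonnegative (assumption (A1)). -/
structure UrnProcess (d : ℕ) {Ω : Type*} [mΩ : MeasurableSpace Ω]
    (μ : Measure Ω) (F : Filtration ℕ mΩ) (R : Matrix (Fin d) (Fin d) ℝ) where
  C : ℕ → Ω → Fin d → ℝ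
  χ : ℕ → Ω → Fin d → ℝ
  adapted : MeasureTheory.Adapted F C
  chi_meas : ∀ n : ℕ, StronglyMeasurable[F (n + 1)] (χ (n + 1))
  C0 : Fin d → ℝ
  C0_det : ∀ ω, C 0 ω = C0
  t0_pos : 0 < ∑ i, C0 i
  dynamics : ∀ n ω, C (n + 1) ω = C n ω + Matrix.vecMul (χ (n + 1) ω) R
  chi_basis : ∀ n ω, ∃ i : Fin d, χ (n + 1) ω = Pi.single i 1
  chi_cond : ∀ (n : ℕ) (i : Fin d),
    μ[Set.indicator {ω | χ (n + 1) ω = Pi.single i 1} (fun _ => (1 : ℝ)) | F n]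
      =ᵐ[μ] fun ω => C n ω i / ∑ j, C n ω j
  tenable : ∀ᵐ ω ∂μ, ∀ n i, 0 ≤ C n ω i

/-- The spectral assumptions (A2)–(A4) on the replacement matrix `R`: `R` is diagonalisable
over ℝ by an invertible matrix `U` (with inverse `V`) as `V * R * U = diagonal lam` with
real eigenvalues `lam 0 ≥ lam 1 ≥ …`; the principal eigenvalue `s = lam 0` is positive and
`s > 2 λ` for every other eigenvalue λ (A2, "small"); the first column of `U` is the all-ones
vector `e⊤` (so `R e⊤ = s e⊤`), and the first row `v₁` of `V = U⁻¹` — the principal left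
eigenvector — is a stochastic vector (A3, "strictly balanced"). -/
structure UrnSpectral (d : ℕ) [NeZero d] (R : Matrix (Fin d) (Fin d) ℝ) where
  U : Matrix (Fin d) (Fin d) ℝ
  V : Matrix (Fin d) (Fin d) ℝ
  UV : U * V = 1
  VU : V * U = 1
  lam : Fin d → ℝ
  diag : R * U = U * Matrix.diagonal lam
  lam_anti : Antitone lam
  s_pos : 0 < lam 0
  small : ∀ j : Fin d, j ≠ 0 → 2 * lam j < lam 0
  U_col_one : ∀ i : Fin d, U i 0 = 1
  v1_nonneg : ∀ i : Fin d, 0 ≤ V 0 i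
  v1_sum : ∑ i, V 0 i = 1

namespace UrnAux

lemma abs_step_sum (x : ℕ → ℝ) (K : ℝ) (hinc : ∀ n, |x (n+1) - x n| ≤ K) :
    ∀ p q : ℕ, |x (p+q) - x p| ≤ K * q := by
  intro p q
  induction q with
  | zero => simp
  | succ q ih =>
      have h1 := hinc (p + q)
      have h2 : |x (p + (q+1)) - x p| ≤ |x (p + q + 1) - x (p+q)| + |x (p+q) - x p| := by
        have := abs_sub_le (x (p + q + 1)) (x (p + q)) (x p)
        simpa [show p + (q+1) = p + q + 1 by ring] using this
      have h3 : |x (p + (q+1)) - x p| ≤ K + K * q := by linarith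
      calc |x (p + (q+1)) - x p| ≤ K + K * q := h3
        _ = K * (q+1 : ℕ) := by push_cast; ring

lemma interp (x : ℕ → ℝ) (K : ℝ) (hinc : ∀ n, |x (n+1) - x n| ≤ K)
    (hsub : ∀ k : ℕ, ∀ᶠ n : ℕ in atTop, |x (n^2)| ≤ (n^2 : ℝ)/(k+1)) :
    Tendsto (fun n : ℕ => x n / n) atTop (𝓝 0) := by
  have hK : 0 ≤ K := le_trans (abs_nonneg _) (hinc 0)
  rw [Metric.tendsto_atTop]
  intro ε hε
  obtain ⟨k, hk⟩ := exists_nat_one_div_lt (half_pos hε)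
  set N2 : ℕ := ⌈(4*(K+1))/ε⌉₊ with hN2def
  obtain ⟨N1, hN1⟩ := eventually_atTop.1 (hsub k)
  set M : ℕ := max (max N1 N2) 1 with hMdef
  refine ⟨(M+1)^2, fun m hm => ?_⟩
  set n : ℕ := m.sqrt with hn
  have hn2le : n^2 ≤ m := by simpa [pow_two] using Nat.sqrt_le' m
  have hmlt : m < (n+1)^2 := by simpa [pow_two] using Nat.lt_succ_sqrt' m
  have hMn : M + 1 ≤ n := by
    rw [hn, Nat.le_sqrt']
    first
      | exact hm
      | calc (M+1) * (M+1) = (M+1)^2 := by ring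
             _ ≤ m := hm
  have hn1 : 1 ≤ n := le_trans (by omega) hMn
  have hnN1 : N1 ≤ n := by omega
  have hnN2 : N2 ≤ n := by omega
  have hxn2 : |x (n^2)| ≤ (n^2 : ℝ)/(k+1) := hN1 n hnN1
  have hdiff : |x m - x (n^2)| ≤ K * (2*n) := by
    have h1 : m - n^2 ≤ 2*n := by
      have : m < n^2 + 2*n + 1 := by
        have : (n+1)^2 = n^2 + 2*n + 1 := by ring
        omega
      omega
    have h2 : m = n^2 + (m - n^2) := by omega
    calc |x m - x (n^2)| = |x (n^2 + (m - n^2)) - x (n^2)| := by rw [← h2]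
      _ ≤ K * (m - n^2 : ℕ) := abs_step_sum x K hinc _ _
      _ ≤ K * (2*n : ℕ) := by
          apply mul_le_mul_of_nonneg_left _ hK
          exact_mod_cast h1
      _ = K * (2*n) := by push_cast; ring
  have hxm : |x m| ≤ (n^2 : ℝ)/(k+1) + K * (2*n) := by
    calc |x m| = |x (n^2) + (x m - x (n^2))| := by ring_nf
      _ ≤ |x (n^2)| + |x m - x (n^2)| := abs_add_le _ _
      _ ≤ (n^2 : ℝ)/(k+1) + K * (2*n) := by linarith
  have hm1 : 1 ≤ m := le_trans (Nat.one_le_pow _ _ (by omega)) hm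
  have hmpos : (0:ℝ) < m := by exact_mod_cast hm1
  have hnpos : (0:ℝ) < n := by exact_mod_cast hn1
  have hn2m : (n:ℝ)^2 ≤ m := by exact_mod_cast hn2le
  have hkpos : (0:ℝ) < (k:ℝ) + 1 := by positivity
  rw [Real.dist_eq, sub_zero, abs_div, abs_of_nonneg (le_of_lt hmpos)]
  have hA : (n:ℝ)^2/(k+1)/m ≤ 1/(k+1) := by
    rw [div_div, div_le_div_iff₀ (by positivity) hkpos]
    nlinarith
  have hB : K*(2*n)/m ≤ 2*K/n := by
    rw [div_le_div_iff₀ hmpos hnpos]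
    nlinarith
  have hC : 2*K/n < ε/2 := by
    rw [div_lt_iff₀ hnpos]
    have hge : (N2:ℝ) ≤ n := by exact_mod_cast hnN2
    have hceil : (4*(K+1))/ε ≤ (N2:ℝ) := Nat.le_ceil _
    have : 4*(K+1) ≤ ε * n := by
      rw [div_le_iff₀ hε] at hceil
      calc 4*(K+1) ≤ (N2:ℝ) * ε := hceil
        _ ≤ (n:ℝ) * ε := by nlinarith
        _ = ε * n := by ring
    nlinarith
  calc |x m| / m ≤ ((n:ℝ)^2/(k+1) + K * (2*n)) / m := by
        gcongr
      _ = (n:ℝ)^2/(k+1)/m + K*(2*n)/m := by ring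
      _ ≤ 1/(k+1) + 2*K/n := add_le_add hA hB
      _ < ε/2 + ε/2 := by linarith
      _ = ε := by ring

lemma var_growth (v q : ℕ → ℝ) (K2 : ℝ) (hK2 : 0 ≤ K2) (hv0 : v 0 = 0)
    (hvnn : ∀ n, 0 ≤ v n) (hq : ∀ n, 0 ≤ q n)
    (hrec : ∀ n, v (n+1) ≤ q n * v n + K2)
    (L : ℝ) (hL : L < 1)
    (hlim : Tendsto (fun n : ℕ => (q n - 1) * ((n:ℝ)+1)) atTop (𝓝 L)) :
    ∃ B : ℝ, 0 ≤ B ∧ ∀ n : ℕ, v n ≤ B * ((n:ℝ)+1) := by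
  set θ : ℝ := (L+1)/2 with hθdef
  have hLθ : L < θ := by simp only [hθdef]; linarith
  have hθ1 : θ < 1 := by simp only [hθdef]; linarith
  have hev : ∀ᶠ n : ℕ in atTop, (q n - 1) * ((n:ℝ)+1) < θ :=
    hlim.eventually_lt_const hLθ
  obtain ⟨n0, hn0⟩ := eventually_atTop.1 hev
  set S : ℝ := ∑ k ∈ Finset.range (n0+1), v k with hSdef
  have hS0 : 0 ≤ S := Finset.sum_nonneg fun k _ => hvnn k
  set B : ℝ := K2/(1-θ) + S with hBdef
  have h1θ : 0 < 1 - θ := by linarith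
  have hB0 : 0 ≤ B := by positivity
  have hpre : ∀ n ≤ n0, v n ≤ B := by
    intro n hn
    have : v n ≤ S :=
      Finset.single_le_sum (f := v) (fun k _ => hvnn k)
        (Finset.mem_range.2 (by omega))
    have : K2/(1-θ) ≥ 0 := by positivity
    simp only [hBdef]; linarith
  refine ⟨B, hB0, ?_⟩
  intro n
  induction n with
  | zero => simp [hv0, hB0]
  | succ n ih =>
      by_cases hc : n + 1 ≤ n0
      · have h1 := hpre (n+1) hc
        have hn' : (0:ℝ) ≤ (n:ℝ) := Nat.cast_nonneg n
        push_cast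
        nlinarith
      · have hge : n0 ≤ n := by omega
        have hθn := le_of_lt (hn0 n hge)
        have h1 : v (n+1) ≤ q n * v n + K2 := hrec n
        have h2 : q n * v n ≤ q n * (B * ((n:ℝ)+1)) :=
          mul_le_mul_of_nonneg_left ih (hq n)
        have h3 : q n * (B * ((n:ℝ)+1)) = B * ((n:ℝ)+1) + B * ((q n - 1) * ((n:ℝ)+1)) := by
          ring
        have h4 : B * ((q n - 1) * ((n:ℝ)+1)) ≤ B * θ :=
          mul_le_mul_of_nonneg_left hθn hB0
        have h5 : B * θ + K2 ≤ B := by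
          have : B * (1-θ) ≥ K2 := by
            have : K2/(1-θ) ≤ B := by simp only [hBdef]; linarith
            calc K2 = (K2/(1-θ)) * (1-θ) := by field_simp
              _ ≤ B * (1-θ) := by nlinarith
          nlinarith
        have : v (n+1) ≤ B * ((n:ℝ)+1) + B := by linarith
        calc v (n+1) ≤ B * ((n:ℝ)+1) + B := this
          _ = B * (((n:ℝ)+1)+1) := by ring
          _ = B * (((n+1:ℕ):ℝ)+1) := by push_cast; ring

lemma mean_decay (a t : ℕ → ℝ) (lj s t0 : ℝ) (ht : ∀ n : ℕ, t n = t0 + n * s)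
    (ht0 : 0 < t0) (hs : 0 < s) (hsm : 2 * lj < s)
    (hrec : ∀ n, a (n+1) = a n * (1 + lj / t n)) :
    Tendsto (fun n : ℕ => a n / n) atTop (𝓝 0) := by
  have htpos : ∀ n : ℕ, 0 < t n := fun n => by rw [ht]; positivity
  have htt : Tendsto t atTop atTop := by
    have : Tendsto (fun n : ℕ => t0 + (n:ℝ) * s) atTop atTop :=
      tendsto_atTop_add_const_left _ _ (tendsto_natCast_atTop_atTop.atTop_mul_const hs)
    exact this.congr fun n => (ht n).symm
  have hdiv0 : ∀ c : ℝ, Tendsto (fun n : ℕ => c / t n) atTop (𝓝 0) :=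
    fun c => tendsto_const_nhds.div_atTop htt
  have hev1 : ∀ᶠ n : ℕ in atTop, 2*lj + lj^2 / t n ≤ s := by
    have h : Tendsto (fun n : ℕ => 2*lj + lj^2 / t n) atTop (𝓝 (2*lj)) := by
      simpa using (tendsto_const_nhds (x := 2*lj)).add (hdiv0 (lj^2))
    exact (h.eventually_lt_const hsm).mono fun n hn => le_of_lt hn
  have hev2 : ∀ᶠ n : ℕ in atTop, 0 ≤ 1 + lj / t n := by
    have h := (hdiv0 lj).eventually_const_lt (show (-1:ℝ) < 0 by norm_num)
    exact h.mono fun n hn => by linarith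
  obtain ⟨n1, hn1⟩ := eventually_atTop.1 (hev1.and hev2)
  set C : ℝ := ∑ k ∈ Finset.range (n1+1), |a k| / Real.sqrt (t k) with hCdef
  have hC0 : 0 ≤ C := Finset.sum_nonneg fun k _ => by positivity
  have hsqrtpos : ∀ n, 0 < Real.sqrt (t n) := fun n => Real.sqrt_pos.2 (htpos n)
  have claim : ∀ n, n1 ≤ n → |a n| ≤ C * Real.sqrt (t n) := by
    intro n hn
    induction n, hn using Nat.le_induction with
    | base =>
        have h1 : |a n1| / Real.sqrt (t n1) ≤ C :=
          Finset.single_le_sum (f := fun k => |a k| / Real.sqrt (t k))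
            (fun k _ => by positivity) (Finset.mem_range.2 (by omega))
        calc |a n1| = (|a n1| / Real.sqrt (t n1)) * Real.sqrt (t n1) :=
              (div_mul_cancel₀ _ (ne_of_gt (hsqrtpos n1))).symm
          _ ≤ C * Real.sqrt (t n1) :=
              mul_le_mul_of_nonneg_right h1 (le_of_lt (hsqrtpos n1))
    | succ n hn ih =>
        obtain ⟨h1, h2⟩ := hn1 n hn
        have htn := htpos n
        have habs : |a (n+1)| = |a n| * (1 + lj / t n) := by
          rw [hrec n, abs_mul, abs_of_nonneg h2]
        have hkey : Real.sqrt (t n) * (1 + lj / t n) ≤ Real.sqrt (t (n+1)) := by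
          have hLHS : 0 ≤ Real.sqrt (t n) * (1 + lj / t n) :=
            mul_nonneg (Real.sqrt_nonneg _) h2
          have ht1 : t (n+1) = t n + s := by rw [ht, ht]; push_cast; ring
          have hsq : (Real.sqrt (t n) * (1 + lj / t n))^2 ≤ t (n+1) := by
            rw [mul_pow, Real.sq_sqrt (le_of_lt htn), ht1]
            have heq2 : t n * (1 + lj / t n)^2 = t n + 2*lj + lj^2 / t n := by
              field_simp
              ring
            rw [heq2]
            linarith
          calc Real.sqrt (t n) * (1 + lj / t n)
              = Real.sqrt ((Real.sqrt (t n) * (1 + lj / t n))^2) :=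
                (Real.sqrt_sq hLHS).symm
            _ ≤ Real.sqrt (t (n+1)) := Real.sqrt_le_sqrt hsq
        calc |a (n+1)| = |a n| * (1 + lj / t n) := habs
          _ ≤ C * Real.sqrt (t n) * (1 + lj / t n) := by
              exact mul_le_mul_of_nonneg_right ih h2
          _ = C * (Real.sqrt (t n) * (1 + lj / t n)) := by ring
          _ ≤ C * Real.sqrt (t (n+1)) := mul_le_mul_of_nonneg_left hkey hC0
  -- the sqrt(t n)/n tends to zero
  have hrhs : Tendsto (fun n : ℕ => Real.sqrt (t n) / (n:ℝ)) atTop (𝓝 0) := by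
    have h1 : Tendsto (fun n : ℕ => t n / ((n:ℝ))^2) atTop (𝓝 0) := by
      have ha : Tendsto (fun n : ℕ => t0 / ((n:ℝ))^2) atTop (𝓝 0) :=
        tendsto_const_nhds.div_atTop
          (tendsto_natCast_atTop_atTop.atTop_mul_atTop₀ tendsto_natCast_atTop_atTop
            |>.congr fun n => by ring)
      have hb : Tendsto (fun n : ℕ => s / (n:ℝ)) atTop (𝓝 0) :=
        tendsto_const_nhds.div_atTop tendsto_natCast_atTop_atTop
      have heq : ∀ᶠ n : ℕ in atTop, t0 / ((n:ℝ))^2 + s / (n:ℝ) = t n / ((n:ℝ))^2 := by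
        filter_upwards [eventually_ge_atTop 1] with n hn
        have hnpos : (0:ℝ) < n := by exact_mod_cast hn
        rw [ht]; field_simp
      have := (ha.add hb)
      rw [add_zero] at this
      exact Tendsto.congr' heq this
    have h2 : Tendsto ((fun x => Real.sqrt x) ∘ fun n : ℕ => t n / ((n:ℝ))^2)
        atTop (𝓝 0) := by
      have := (Real.continuous_sqrt.tendsto 0).comp h1
      rwa [Real.sqrt_zero] at this
    apply h2.congr'
    filter_upwards [eventually_ge_atTop 1] with n hn
    have hnpos : (0:ℝ) < n := by exact_mod_cast hn
    simp only [Function.comp_apply]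
    rw [Real.sqrt_div (le_of_lt (htpos n))]
    congr 1
    rw [Real.sqrt_sq (le_of_lt hnpos)]
  rw [tendsto_zero_iff_norm_tendsto_zero]
  apply squeeze_zero' (g := fun n : ℕ => C * (Real.sqrt (t n) / (n:ℝ)))
  · exact Eventually.of_forall fun n => norm_nonneg _
  · filter_upwards [eventually_ge_atTop (max n1 1)] with n hn
    have hn1' : n1 ≤ n := le_trans (le_max_left _ _) hn
    have hn1'' : 1 ≤ n := le_trans (le_max_right _ _) hn
    have hnpos : (0:ℝ) < n := by exact_mod_cast hn1''
    have := claim n hn1'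
    rw [Real.norm_eq_abs, abs_div, abs_of_nonneg (le_of_lt hnpos), ← mul_div_assoc]
    gcongr
  · simpa using hrhs.const_mul C

lemma cheb_bc {Ω : Type*} [mΩ : MeasurableSpace Ω] (μ : Measure Ω) [IsProbabilityMeasure μ]
    (X : ℕ → Ω → ℝ)
    (hXint : ∀ n, Integrable (fun ω => (X n ω)^2) μ)
    (B : ℝ) (hB : 0 ≤ B) (hvar : ∀ n, ∫ ω, (X n ω)^2 ∂μ ≤ B * ((n:ℝ)+1)) :
    ∀ᵐ ω ∂μ, ∀ k : ℕ, ∀ᶠ n : ℕ in atTop, |X (n^2) ω| ≤ (n:ℝ)^2/(k+1) := by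
  rw [ae_all_iff]
  intro k
  have hk1 : (0:ℝ) < (k:ℝ)+1 := by positivity
  set c : ℕ → ℝ := fun n => (((n:ℝ))+1)^2/((k:ℝ)+1) with hcdef
  have hcpos : ∀ n : ℕ, 0 < c n := by
    intro n
    have h : (0:ℝ) < ((n:ℝ))+1 := by positivity
    simp only [hcdef]
    positivity
  set s : ℕ → Set Ω := fun n => {ω | (c n)^2 ≤ (X ((n+1)^2) ω)^2} with hsdef
  set c1 : ℝ := 2*B*((k:ℝ)+1)^2 with hc1def
  have hc1 : 0 ≤ c1 := by positivity
  have hmeas : ∀ n : ℕ, (μ (s n)).toReal ≤ c1 / ((n:ℝ)+1)^2 := by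
    intro n
    set a : ℝ := (n:ℝ)+1 with hadef
    have ha1 : (1:ℝ) ≤ a := by
      simp only [hadef]
      have := Nat.cast_nonneg (α:=ℝ) n
      linarith
    have hapos : (0:ℝ) < a := by linarith
    have hmark := mul_meas_ge_le_integral_of_nonneg
      (μ := μ) (Eventually.of_forall (fun ω => sq_nonneg (X ((n+1)^2) ω)))
      (hXint ((n+1)^2)) ((c n)^2)
    have hv := hvar ((n+1)^2)
    have hcast : ((((n+1)^2 : ℕ)):ℝ) + 1 = a^2 + 1 := by push_cast [hadef]; ring
    have hcn2 : (0:ℝ) < (c n)^2 := pow_pos (hcpos n) 2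
    have hμ : (μ (s n)).toReal ≤ (B * (a^2+1)) / (c n)^2 := by
      rw [le_div_iff₀ hcn2]
      calc (μ (s n)).toReal * (c n)^2 = (c n)^2 * (μ (s n)).toReal := by ring
        _ ≤ ∫ ω, (X ((n+1)^2) ω)^2 ∂μ := hmark
        _ ≤ B * (a^2+1) := by rw [← hcast]; exact hv
    refine hμ.trans ?_
    have hceq : (c n)^2 = a^4 / ((k:ℝ)+1)^2 := by
      simp only [hcdef, hadef]
      field_simp
    rw [hceq, div_le_div_iff₀ (by positivity) (by positivity)]
    have hrw : c1 * (a^4 / ((k:ℝ)+1)^2) = 2*B*a^4 := by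
      simp only [hc1def]; field_simp
    rw [hrw]
    have h2 : (1:ℝ) ≤ a^2 := by nlinarith
    nlinarith [mul_nonneg (mul_nonneg hB (sq_nonneg a)) (sub_nonneg.2 h2)]
  have hsum0 : Summable (fun n : ℕ => 1 / ((n:ℝ))^2) := by
    exact_mod_cast Real.summable_one_div_nat_pow.2 one_lt_two
  have hsum1 : Summable (fun n : ℕ => 1 / (((n:ℝ))+1)^2) := by
    have h := (summable_nat_add_iff 1).2 hsum0
    exact h.congr fun n => by push_cast; ring
  have hsum2 : Summable (fun n : ℕ => c1 / ((n:ℝ)+1)^2) := by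
    have h := hsum1.mul_left c1
    exact h.congr fun n => by ring
  have htsum : ∑' n, μ (s n) ≠ ∞ := by
    have hle : ∀ n : ℕ, μ (s n) ≤ ENNReal.ofReal (c1 / ((n:ℝ)+1)^2) := fun n => by
      rw [← ENNReal.ofReal_toReal (measure_ne_top μ (s n))]
      exact ENNReal.ofReal_le_ofReal (hmeas n)
    have h1 : ∑' n, μ (s n) ≤ ∑' n : ℕ, ENNReal.ofReal (c1 / ((n:ℝ)+1)^2) :=
      ENNReal.tsum_le_tsum hle
    have h2 : ∑' n : ℕ, ENNReal.ofReal (c1 / ((n:ℝ)+1)^2) < ∞ := by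
      rw [← ENNReal.ofReal_tsum_of_nonneg (fun n => by positivity) hsum2]
      exact ENNReal.ofReal_lt_top
    exact ne_of_lt (lt_of_le_of_lt h1 h2)
  filter_upwards [ae_eventually_notMem htsum] with ω hω
  obtain ⟨N, hN⟩ := eventually_atTop.1 hω
  rw [eventually_atTop]
  refine ⟨N+1, fun n hn => ?_⟩
  obtain ⟨m, rfl⟩ : ∃ m, n = m + 1 := ⟨n-1, by omega⟩
  have hm : N ≤ m := by omega
  have hns := hN m hm
  simp only [hsdef, Set.mem_setOf_eq, not_le] at hns
  have hcm := hcpos m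
  have hgoal : ((((m+1:ℕ)):ℝ))^2/((k:ℝ)+1) = c m := by
    simp only [hcdef]; push_cast; ring
  rw [hgoal]
  rw [abs_le]
  constructor
  · nlinarith [hns, hcm, sq_nonneg (X ((m+1)^2) ω + c m)]
  · nlinarith [hns, hcm, sq_nonneg (X ((m+1)^2) ω - c m)]


lemma bdd_meas_integrable {Ω : Type*} [mΩ : MeasurableSpace Ω] {μ : Measure Ω}
    [IsProbabilityMeasure μ] (f : Ω → ℝ) (hf : AEStronglyMeasurable f μ)
    (c : ℝ) (hb : ∀ ω, |f ω| ≤ c) : Integrable f μ :=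
  (integrable_const c).mono' hf (Eventually.of_forall (by simpa [Real.norm_eq_abs] using hb))

lemma bdd_meas_integrable2 {Ω : Type*} [mΩ : MeasurableSpace Ω] {μ : Measure Ω}
    [IsProbabilityMeasure μ] (f h : Ω → ℝ) (hf : AEStronglyMeasurable f μ)
    (hh : AEStronglyMeasurable h μ) (cf ch : ℝ)
    (hbf : ∀ ω, |f ω| ≤ cf) (hbh : ∀ ω, |h ω| ≤ ch) :
    Integrable (fun ω => f ω * h ω) μ :=
  bdd_meas_integrable _ (hf.mul hh) (cf * ch) fun ω => by
    rw [abs_mul]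
    exact mul_le_mul (hbf ω) (hbh ω) (abs_nonneg _) (le_trans (abs_nonneg _) (hbf ω))

section Urn

variable {d : ℕ} [NeZero d] {Ω : Type*} [mΩ : MeasurableSpace Ω]
  {μ : Measure Ω} [IsProbabilityMeasure μ] {F : Filtration ℕ mΩ}
  {R : Matrix (Fin d) (Fin d) ℝ}

lemma aesm_div_const {Ω' : Type*} [mΩ' : MeasurableSpace Ω'] {μ' : Measure Ω'}
    (f : Ω' → ℝ) (hf : AEStronglyMeasurable f μ') (c : ℝ) :
    AEStronglyMeasurable (fun ω => f ω / c) μ' := by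
  simp only [div_eq_mul_inv]
  exact hf.mul_const _

lemma abs_sub'' (a b : ℝ) : |a - b| ≤ |a| + |b| := by
  have h := abs_add_le a (-b)
  simpa [sub_eq_add_neg] using h

lemma vecMul_single (A : Matrix (Fin d) (Fin d) ℝ) (i j : Fin d) :
    Matrix.vecMul (Pi.single i 1) A j = A i j := by
  simp [Matrix.vecMul, dotProduct, Pi.single_apply, ite_mul]

lemma vecMul_expand (v : Fin d → ℝ) (A : Matrix (Fin d) (Fin d) ℝ) (j : Fin d) :
    Matrix.vecMul v A j = ∑ i, v i * A i j := by
  simp [Matrix.vecMul, dotProduct]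

lemma rowsum (spec : UrnSpectral d R) (i : Fin d) : ∑ k, R i k = spec.lam 0 := by
  have h := congrFun (congrFun spec.diag i) 0
  rw [Matrix.mul_apply, Matrix.mul_apply] at h
  simp only [Matrix.diagonal_apply, mul_ite, mul_zero] at h
  rw [Finset.sum_ite_eq' Finset.univ (0 : Fin d)
    (fun k => spec.U i k * spec.lam k)] at h
  simp only [Finset.mem_univ, if_true, spec.U_col_one, mul_one, one_mul] at h
  simpa [spec.U_col_one] using h

/-- transformed process -/
def Yv (urn : UrnProcess d μ F R) (spec : UrnSpectral d R) (n : ℕ) (j : Fin d)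
    (ω : Ω) : ℝ := Matrix.vecMul (urn.C n ω) spec.U j

/-- deterministic total mass -/
def tv (urn : UrnProcess d μ F R) (spec : UrnSpectral d R) (n : ℕ) : ℝ :=
  (∑ i, urn.C0 i) + n * spec.lam 0

lemma tv_succ (urn : UrnProcess d μ F R) (spec : UrnSpectral d R) (n : ℕ) :
    tv urn spec (n+1) = tv urn spec n + spec.lam 0 := by
  simp only [tv]; push_cast; ring

lemma tv_pos (urn : UrnProcess d μ F R) (spec : UrnSpectral d R) (n : ℕ) :
    0 < tv urn spec n := by
  have h1 := urn.t0_pos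
  have h2 := spec.s_pos
  have h3 : (0:ℝ) ≤ n := Nat.cast_nonneg n
  simp only [tv]
  nlinarith

lemma sum_chi_R (urn : UrnProcess d μ F R) (spec : UrnSpectral d R) (n : ℕ) (ω : Ω) :
    ∑ i, Matrix.vecMul (urn.χ (n+1) ω) R i = spec.lam 0 := by
  obtain ⟨i0, hi0⟩ := urn.chi_basis n ω
  rw [hi0]
  calc ∑ i, Matrix.vecMul (Pi.single i0 1) R i = ∑ i, R i0 i :=
        Finset.sum_congr rfl fun i _ => vecMul_single R i0 i
    _ = spec.lam 0 := rowsum spec i0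

lemma t_eq (urn : UrnProcess d μ F R) (spec : UrnSpectral d R) (n : ℕ) (ω : Ω) :
    ∑ i, urn.C n ω i = tv urn spec n := by
  induction n with
  | zero => simp [urn.C0_det, tv]
  | succ n ih =>
      rw [tv_succ]
      rw [show urn.C (n+1) ω = urn.C n ω + Matrix.vecMul (urn.χ (n+1) ω) R from
        urn.dynamics n ω]
      simp only [Pi.add_apply]
      rw [Finset.sum_add_distrib, ih, sum_chi_R urn spec n ω]

lemma Y_succ (urn : UrnProcess d μ F R) (spec : UrnSpectral d R) (n : ℕ) (j : Fin d)
    (ω : Ω) : Yv urn spec (n+1) j ω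
      = Yv urn spec n j ω + spec.lam j * Matrix.vecMul (urn.χ (n+1) ω) spec.U j := by
  simp only [Yv]
  rw [urn.dynamics n ω, Matrix.add_vecMul]
  simp only [Pi.add_apply]
  congr 1
  rw [Matrix.vecMul_vecMul, spec.diag, ← Matrix.vecMul_vecMul, Matrix.vecMul_diagonal]
  ring

lemma Y_col0 (urn : UrnProcess d μ F R) (spec : UrnSpectral d R) (n : ℕ) (ω : Ω) :
    Yv urn spec n 0 ω = tv urn spec n := by
  rw [Yv, vecMul_expand]
  simp only [spec.U_col_one, mul_one]
  exact t_eq urn spec n ω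

lemma C_meas (urn : UrnProcess d μ F R) (n : ℕ) (i : Fin d) :
    StronglyMeasurable[F n] (fun ω => urn.C n ω i) :=
  (continuous_apply i).comp_stronglyMeasurable (urn.adapted n).stronglyMeasurable

lemma Y_meas (urn : UrnProcess d μ F R) (spec : UrnSpectral d R) (n : ℕ) (j : Fin d) :
    StronglyMeasurable[F n] (Yv urn spec n j) := by
  have h : Yv urn spec n j = fun ω => ∑ i, urn.C n ω i * spec.U i j := by
    funext ω; rw [Yv, vecMul_expand]
  rw [h]
  exact Finset.stronglyMeasurable_fun_sum _ fun i _ =>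
    (C_meas urn n i).mul stronglyMeasurable_const

lemma chiU_meas (urn : UrnProcess d μ F R) (spec : UrnSpectral d R) (n : ℕ) (j : Fin d) :
    StronglyMeasurable[F (n+1)] (fun ω => Matrix.vecMul (urn.χ (n+1) ω) spec.U j) := by
  have h : (fun ω => Matrix.vecMul (urn.χ (n+1) ω) spec.U j)
      = fun ω => ∑ i, urn.χ (n+1) ω i * spec.U i j := by
    funext ω; rw [vecMul_expand]
  rw [h]
  exact Finset.stronglyMeasurable_fun_sum _ fun i _ =>
    (((continuous_apply i).comp_stronglyMeasurable (urn.chi_meas n)).mul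
      stronglyMeasurable_const)

/-- uniform bound on the contribution of one draw -/
def MUv (spec : UrnSpectral d R) (j : Fin d) : ℝ := ∑ i, |spec.U i j|

lemma MUv_nonneg (spec : UrnSpectral d R) (j : Fin d) : 0 ≤ MUv spec j :=
  Finset.sum_nonneg fun i _ => abs_nonneg _

lemma chiU_bound (urn : UrnProcess d μ F R) (spec : UrnSpectral d R) (n : ℕ)
    (j : Fin d) (ω : Ω) :
    |Matrix.vecMul (urn.χ (n+1) ω) spec.U j| ≤ MUv spec j := by
  obtain ⟨i0, hi0⟩ := urn.chi_basis n ω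
  rw [hi0, vecMul_single]
  exact Finset.single_le_sum (f := fun i => |spec.U i j|)
    (fun i _ => abs_nonneg _) (Finset.mem_univ i0)

/-- deterministic bound for the transformed process -/
def YB (urn : UrnProcess d μ F R) (spec : UrnSpectral d R) (n : ℕ) (j : Fin d) : ℝ :=
  |Matrix.vecMul urn.C0 spec.U j| + n * (|spec.lam j| * MUv spec j)

lemma YB_nonneg (urn : UrnProcess d μ F R) (spec : UrnSpectral d R) (n : ℕ) (j : Fin d) :
    0 ≤ YB urn spec n j := by
  have h1 := MUv_nonneg spec j
  have h2 : (0:ℝ) ≤ n := Nat.cast_nonneg n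
  have h3 : (0:ℝ) ≤ |spec.lam j| := abs_nonneg _
  have h4 : (0:ℝ) ≤ |Matrix.vecMul urn.C0 spec.U j| := abs_nonneg _
  have h5 := mul_nonneg h2 (mul_nonneg h3 h1)
  simp only [YB]
  linarith

lemma Y_bound (urn : UrnProcess d μ F R) (spec : UrnSpectral d R) (n : ℕ) (j : Fin d)
    (ω : Ω) : |Yv urn spec n j ω| ≤ YB urn spec n j := by
  induction n with
  | zero => simp [Yv, YB, urn.C0_det]
  | succ n ih =>
      rw [Y_succ]
      have h1 := chiU_bound urn spec n j ω
      have h2 : |spec.lam j * Matrix.vecMul (urn.χ (n+1) ω) spec.U j|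
          ≤ |spec.lam j| * MUv spec j := by
        rw [abs_mul]
        exact mul_le_mul_of_nonneg_left h1 (abs_nonneg _)
      calc |Yv urn spec n j ω + spec.lam j * Matrix.vecMul (urn.χ (n+1) ω) spec.U j|
          ≤ |Yv urn spec n j ω| + |spec.lam j * Matrix.vecMul (urn.χ (n+1) ω) spec.U j| :=
            abs_add_le _ _
        _ ≤ YB urn spec n j + |spec.lam j| * MUv spec j := add_le_add ih h2
        _ = YB urn spec (n+1) j := by simp only [YB]; push_cast; ring

end Urn

section Urn2
variable {d : ℕ} [NeZero d] {Ω : Type*} [mΩ : MeasurableSpace Ω]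
  {μ : Measure Ω} [IsProbabilityMeasure μ] {F : Filtration ℕ mΩ}
  {R : Matrix (Fin d) (Fin d) ℝ}

lemma C_bound (urn : UrnProcess d μ F R) (n : ℕ) :
    ∃ cb : ℝ, ∀ (ω : Ω) (i : Fin d), |urn.C n ω i| ≤ cb := by
  induction n with
  | zero =>
      refine ⟨∑ i, |urn.C0 i|, fun ω i => ?_⟩
      rw [urn.C0_det]
      exact Finset.single_le_sum (f := fun i => |urn.C0 i|)
        (fun i _ => abs_nonneg _) (Finset.mem_univ i)
  | succ n ih =>
      obtain ⟨cb, hcb⟩ := ih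
      refine ⟨cb + ∑ p, ∑ q, |R p q|, fun ω i => ?_⟩
      rw [urn.dynamics n ω]
      obtain ⟨i0, hi0⟩ := urn.chi_basis n ω
      simp only [Pi.add_apply]
      rw [hi0, vecMul_single]
      have h1 : |R i0 i| ≤ ∑ q, |R i0 q| :=
        Finset.single_le_sum (f := fun q => |R i0 q|) (fun q _ => abs_nonneg _)
          (Finset.mem_univ i)
      have h2 : ∑ q, |R i0 q| ≤ ∑ p, ∑ q, |R p q| :=
        Finset.single_le_sum (f := fun p => ∑ q, |R p q|)
          (fun p _ => Finset.sum_nonneg fun q _ => abs_nonneg _) (Finset.mem_univ i0)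
      calc |urn.C n ω i + R i0 i| ≤ |urn.C n ω i| + |R i0 i| := abs_add_le _ _
        _ ≤ cb + ∑ p, ∑ q, |R p q| := add_le_add (hcb ω i) (h1.trans h2)

/-- The key conditional-expectation identity in integrated form. -/
lemma key_integral (urn : UrnProcess d μ F R) (spec : UrnSpectral d R)
    (n : ℕ) (j : Fin d) (g : Ω → ℝ) (hg : StronglyMeasurable[F n] g)
    (c : ℝ) (hgb : ∀ ω, |g ω| ≤ c) :
    ∫ ω, g ω * Matrix.vecMul (urn.χ (n+1) ω) spec.U j ∂μ
      = ∫ ω, g ω * (Yv urn spec n j ω / tv urn spec n) ∂μ := by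
  have hgm : AEStronglyMeasurable g μ := (hg.mono (F.le n)).aestronglyMeasurable
  have hgi : Integrable g μ := bdd_meas_integrable g hgm c hgb
  set A : Fin d → Set Ω := fun i => {ω | urn.χ (n+1) ω = Pi.single i 1} with hAdef
  set ind : Fin d → Ω → ℝ := fun i => (A i).indicator (fun _ => (1:ℝ)) with hinddef
  have hAmeas : ∀ i, MeasurableSet (A i) := by
    intro i
    have hχ : Measurable (urn.χ (n+1)) := ((urn.chi_meas n).mono (F.le (n+1))).measurable
    exact hχ (measurableSet_singleton _)
  have hind_int : ∀ i, Integrable (ind i) μ :=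
    fun i => (integrable_const (1:ℝ)).indicator (hAmeas i)
  have hind_bound : ∀ i ω, |ind i ω| ≤ 1 := by
    intro i ω
    simp only [hinddef, Set.indicator_apply]
    split <;> norm_num
  have hind_meas : ∀ i, AEStronglyMeasurable (ind i) μ := fun i => (hind_int i).1
  have hgind : ∀ i, Integrable (fun ω => g ω * ind i ω) μ := fun i =>
    bdd_meas_integrable2 g (ind i) hgm (hind_meas i) c 1 hgb (hind_bound i)
  -- step: ∫ g·1_{A i} = ∫ g·(C n i / t n)
  have hstep : ∀ i, ∫ ω, g ω * ind i ω ∂μ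
      = ∫ ω, g ω * (urn.C n ω i / tv urn spec n) ∂μ := by
    intro i
    have h1 : ∫ ω, (μ[(fun ω => g ω * ind i ω)|F n]) ω ∂μ = ∫ ω, g ω * ind i ω ∂μ :=
      integral_condExp (F.le n)
    have h2 : μ[(fun ω => g ω * ind i ω)|F n] =ᵐ[μ] fun ω => g ω * (μ[ind i|F n]) ω := by
      have := condExp_mul_of_stronglyMeasurable_left (μ := μ) (m := F n) hg (hgind i) (hind_int i)
      exact this
    have h3 : μ[ind i|F n] =ᵐ[μ] fun ω => urn.C n ω i / tv urn spec n := by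
      have hc := urn.chi_cond n i
      refine hc.trans (Eventually.of_forall fun ω => ?_)
      show urn.C n ω i / ∑ j', urn.C n ω j' = urn.C n ω i / tv urn spec n
      rw [t_eq urn spec n ω]
    calc ∫ ω, g ω * ind i ω ∂μ
        = ∫ ω, (μ[(fun ω => g ω * ind i ω)|F n]) ω ∂μ := h1.symm
      _ = ∫ ω, g ω * (μ[ind i|F n]) ω ∂μ := integral_congr_ae h2
      _ = ∫ ω, g ω * (urn.C n ω i / tv urn spec n) ∂μ := by
          apply integral_congr_ae
          filter_upwards [h3] with ω hω
          rw [hω]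
  -- pointwise expansion of the drawn colour
  have hpoint : ∀ ω, Matrix.vecMul (urn.χ (n+1) ω) spec.U j
      = ∑ i, ind i ω * spec.U i j := by
    intro ω
    obtain ⟨i0, hi0⟩ := urn.chi_basis n ω
    rw [hi0, vecMul_single]
    rw [Finset.sum_eq_single i0]
    · have hmem : ω ∈ A i0 := by simp only [hAdef, Set.mem_setOf_eq]; exact hi0
      simp only [hinddef, Set.indicator_of_mem hmem, one_mul]
    · intro i _ hne
      have hnotmem : ω ∉ A i := by
        simp only [hAdef, Set.mem_setOf_eq, hi0]
        intro hcontra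
        have h0 := congrFun hcontra i0
        rw [Pi.single_eq_same, Pi.single_apply] at h0
        rw [if_neg (fun h : i0 = i => hne h.symm)] at h0
        exact one_ne_zero h0
      simp only [hinddef, Set.indicator_of_notMem hnotmem, zero_mul]
    · intro h; exact absurd (Finset.mem_univ i0) h
  obtain ⟨cb, hcb⟩ := C_bound urn n
  have htpos := tv_pos urn spec n
  have hCint : ∀ i : Fin d, Integrable
      (fun ω => (g ω * (urn.C n ω i / tv urn spec n)) * spec.U i j) μ := by
    intro i
    apply bdd_meas_integrable _ ?_ (c * (cb / tv urn spec n) * |spec.U i j|) ?_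
    · exact ((hgm.mul
        ((((C_meas urn n i).mono (F.le n)).aestronglyMeasurable).mul_const
          (tv urn spec n)⁻¹)).mul_const _)
    · intro ω
      have hc0 : 0 ≤ c := le_trans (abs_nonneg _) (hgb ω)
      calc |(g ω * (urn.C n ω i / tv urn spec n)) * spec.U i j|
          = |g ω| * (|urn.C n ω i| / tv urn spec n) * |spec.U i j| := by
            rw [abs_mul, abs_mul, abs_div, abs_of_pos htpos]
        _ ≤ c * (cb / tv urn spec n) * |spec.U i j| := by
            gcongr
            · exact hgb ω
            · exact hcb ω i
  calc ∫ ω, g ω * Matrix.vecMul (urn.χ (n+1) ω) spec.U j ∂μ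
      = ∫ ω, ∑ i, (g ω * ind i ω) * spec.U i j ∂μ := by
        apply integral_congr_ae
        apply Eventually.of_forall
        intro ω
        show g ω * Matrix.vecMul (urn.χ (n+1) ω) spec.U j
            = ∑ i, (g ω * ind i ω) * spec.U i j
        rw [hpoint ω, Finset.mul_sum]
        exact Finset.sum_congr rfl fun i _ => by ring
    _ = ∑ i, ∫ ω, (g ω * ind i ω) * spec.U i j ∂μ :=
        integral_finset_sum _ (fun i _ => (hgind i).mul_const _)
    _ = ∑ i, (∫ ω, g ω * ind i ω ∂μ) * spec.U i j :=
        Finset.sum_congr rfl fun i _ => integral_mul_const _ _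
    _ = ∑ i, (∫ ω, g ω * (urn.C n ω i / tv urn spec n) ∂μ) * spec.U i j :=
        Finset.sum_congr rfl fun i _ => by rw [hstep i]
    _ = ∑ i, ∫ ω, (g ω * (urn.C n ω i / tv urn spec n)) * spec.U i j ∂μ :=
        Finset.sum_congr rfl fun i _ => (integral_mul_const _ _).symm
    _ = ∫ ω, ∑ i, (g ω * (urn.C n ω i / tv urn spec n)) * spec.U i j ∂μ :=
        (integral_finset_sum _ (fun i _ => hCint i)).symm
    _ = ∫ ω, g ω * (Yv urn spec n j ω / tv urn spec n) ∂μ := by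
        apply integral_congr_ae
        apply Eventually.of_forall
        intro ω
        show ∑ i, (g ω * (urn.C n ω i / tv urn spec n)) * spec.U i j
            = g ω * (Matrix.vecMul (urn.C n ω) spec.U j / tv urn spec n)
        rw [vecMul_expand, Finset.sum_div, Finset.mul_sum]
        exact Finset.sum_congr rfl fun i _ => by ring

end Urn2

section Urn3
variable {d : ℕ} [NeZero d] {Ω : Type*} [mΩ : MeasurableSpace Ω]
  {μ : Measure Ω} [IsProbabilityMeasure μ] {F : Filtration ℕ mΩ}
  {R : Matrix (Fin d) (Fin d) ℝ}

/-- the mean of the transformed process -/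
def av (urn : UrnProcess d μ F R) (spec : UrnSpectral d R) (j : Fin d) (n : ℕ) : ℝ :=
  ∫ ω, Yv urn spec n j ω ∂μ

lemma Y_aesm (urn : UrnProcess d μ F R) (spec : UrnSpectral d R) (n : ℕ) (j : Fin d) :
    AEStronglyMeasurable (Yv urn spec n j) μ :=
  ((Y_meas urn spec n j).mono (F.le n)).aestronglyMeasurable

lemma Y_int (urn : UrnProcess d μ F R) (spec : UrnSpectral d R) (n : ℕ) (j : Fin d) :
    Integrable (Yv urn spec n j) μ :=
  bdd_meas_integrable _ (Y_aesm urn spec n j) _ (Y_bound urn spec n j)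

lemma chiU_aesm (urn : UrnProcess d μ F R) (spec : UrnSpectral d R) (n : ℕ) (j : Fin d) :
    AEStronglyMeasurable (fun ω => Matrix.vecMul (urn.χ (n+1) ω) spec.U j) μ :=
  ((chiU_meas urn spec n j).mono (F.le (n+1))).aestronglyMeasurable

lemma chiU_int (urn : UrnProcess d μ F R) (spec : UrnSpectral d R) (n : ℕ) (j : Fin d) :
    Integrable (fun ω => Matrix.vecMul (urn.χ (n+1) ω) spec.U j) μ :=
  bdd_meas_integrable _ (chiU_aesm urn spec n j) _ (chiU_bound urn spec n j)

lemma av_abs (urn : UrnProcess d μ F R) (spec : UrnSpectral d R) (n : ℕ) (j : Fin d) :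
    |av urn spec j n| ≤ YB urn spec n j := by
  have h1 : |av urn spec j n| ≤ ∫ ω, |Yv urn spec n j ω| ∂μ := by
    simpa [av, Real.norm_eq_abs] using
      norm_integral_le_integral_norm (f := Yv urn spec n j) (μ := μ)
  have h2 : ∫ ω, |Yv urn spec n j ω| ∂μ ≤ ∫ _ω, YB urn spec n j ∂μ :=
    integral_mono (Y_int urn spec n j).abs (integrable_const _)
      (fun ω => Y_bound urn spec n j ω)
  have h3 : ∫ _ω, YB urn spec n j ∂μ = YB urn spec n j := by
    simp [integral_const]
  linarith [h1.trans h2]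

lemma av_rec (urn : UrnProcess d μ F R) (spec : UrnSpectral d R) (j : Fin d) (n : ℕ) :
    av urn spec j (n+1) = av urn spec j n * (1 + spec.lam j / tv urn spec n) := by
  have hkey := key_integral urn spec n j (fun _ => (1:ℝ)) stronglyMeasurable_const 1
    (fun ω => by norm_num)
  simp only [one_mul] at hkey
  have h1 : ∫ ω, Yv urn spec (n+1) j ω ∂μ
      = ∫ ω, (Yv urn spec n j ω + spec.lam j * Matrix.vecMul (urn.χ (n+1) ω) spec.U j) ∂μ :=
    integral_congr_ae (Eventually.of_forall fun ω => Y_succ urn spec n j ω)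
  have h2 : ∫ ω, (Yv urn spec n j ω
        + spec.lam j * Matrix.vecMul (urn.χ (n+1) ω) spec.U j) ∂μ
      = (∫ ω, Yv urn spec n j ω ∂μ)
        + spec.lam j * ∫ ω, Matrix.vecMul (urn.χ (n+1) ω) spec.U j ∂μ := by
    rw [integral_add (Y_int urn spec n j) ((chiU_int urn spec n j).const_mul _),
      integral_const_mul]
  have h3 : ∫ ω, Yv urn spec n j ω / tv urn spec n ∂μ
      = (∫ ω, Yv urn spec n j ω ∂μ) / tv urn spec n := integral_div _ _
  have htpos := tv_pos urn spec n
  show ∫ ω, Yv urn spec (n+1) j ω ∂μ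
      = (∫ ω, Yv urn spec n j ω ∂μ) * (1 + spec.lam j / tv urn spec n)
  rw [h1, h2, hkey, h3]
  field_simp

/-- centred process -/
def Xv (urn : UrnProcess d μ F R) (spec : UrnSpectral d R) (j : Fin d) (n : ℕ)
    (ω : Ω) : ℝ := Yv urn spec n j ω - av urn spec j n

lemma X_bound (urn : UrnProcess d μ F R) (spec : UrnSpectral d R) (j : Fin d) (n : ℕ)
    (ω : Ω) : |Xv urn spec j n ω| ≤ 2 * YB urn spec n j := by
  have h1 := Y_bound urn spec n j ω
  have h2 := av_abs urn spec n j
  calc |Xv urn spec j n ω| ≤ |Yv urn spec n j ω| + |av urn spec j n| := abs_sub'' _ _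
    _ ≤ 2 * YB urn spec n j := by linarith

lemma X_aesm (urn : UrnProcess d μ F R) (spec : UrnSpectral d R) (j : Fin d) (n : ℕ) :
    AEStronglyMeasurable (fun ω => Xv urn spec j n ω) μ :=
  (Y_aesm urn spec n j).sub aestronglyMeasurable_const

lemma X_measF (urn : UrnProcess d μ F R) (spec : UrnSpectral d R) (j : Fin d) (n : ℕ) :
    StronglyMeasurable[F n] (fun ω => Xv urn spec j n ω) :=
  (Y_meas urn spec n j).sub stronglyMeasurable_const

lemma X_sq_int (urn : UrnProcess d μ F R) (spec : UrnSpectral d R) (j : Fin d) (n : ℕ) :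
    Integrable (fun ω => (Xv urn spec j n ω)^2) μ := by
  have h := bdd_meas_integrable2 _ _ (X_aesm urn spec j n) (X_aesm urn spec j n)
    (2 * YB urn spec n j) (2 * YB urn spec n j)
    (X_bound urn spec j n) (X_bound urn spec j n)
  exact h.congr (Eventually.of_forall fun ω => by
    show Xv urn spec j n ω * Xv urn spec j n ω = (Xv urn spec j n ω)^2
    rw [sq])

lemma X_zero (urn : UrnProcess d μ F R) (spec : UrnSpectral d R) (j : Fin d) (ω : Ω) :
    Xv urn spec j 0 ω = 0 := by
  have hY : ∀ ω' : Ω, Yv urn spec 0 j ω' = Matrix.vecMul urn.C0 spec.U j := by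
    intro ω'; rw [Yv, urn.C0_det]
  have ha : av urn spec j 0 = Matrix.vecMul urn.C0 spec.U j := by
    rw [av]
    rw [integral_congr_ae (Eventually.of_forall hY)]
    simp [integral_const]
  rw [Xv, hY, ha, sub_self]

/-- uniform bound for `Y/t` and `a/t` -/
def MBv (urn : UrnProcess d μ F R) (spec : UrnSpectral d R) (j : Fin d) : ℝ :=
  |Matrix.vecMul urn.C0 spec.U j| / tv urn spec 0
    + |spec.lam j| * MUv spec j / spec.lam 0

lemma YB_div_bound (urn : UrnProcess d μ F R) (spec : UrnSpectral d R) (j : Fin d)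
    (n : ℕ) : YB urn spec n j / tv urn spec n ≤ MBv urn spec j := by
  have ht0 := tv_pos urn spec 0
  have htn := tv_pos urn spec n
  have hs := spec.s_pos
  have hA : (0:ℝ) ≤ |Matrix.vecMul urn.C0 spec.U j| := abs_nonneg _
  have hBq : (0:ℝ) ≤ |spec.lam j| * MUv spec j :=
    mul_nonneg (abs_nonneg _) (MUv_nonneg spec j)
  have hmono : tv urn spec 0 ≤ tv urn spec n := by
    simp only [tv]
    have : (0:ℝ) ≤ (n:ℝ) * spec.lam 0 := mul_nonneg (Nat.cast_nonneg n) (le_of_lt hs)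
    push_cast
    linarith
  have hb1 : |Matrix.vecMul urn.C0 spec.U j| / tv urn spec n
      ≤ |Matrix.vecMul urn.C0 spec.U j| / tv urn spec 0 := by
    gcongr
  have hb2 : (n:ℝ) * (|spec.lam j| * MUv spec j) / tv urn spec n
      ≤ |spec.lam j| * MUv spec j / spec.lam 0 := by
    rw [div_le_div_iff₀ htn hs]
    have hexp : tv urn spec n = tv urn spec 0 + (n:ℝ) * spec.lam 0 := by
      simp only [tv]; push_cast; ring
    nlinarith [mul_nonneg hBq (le_of_lt ht0)]
  calc YB urn spec n j / tv urn spec n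
      = |Matrix.vecMul urn.C0 spec.U j| / tv urn spec n
        + (n:ℝ) * (|spec.lam j| * MUv spec j) / tv urn spec n := by
        rw [YB, add_div]
    _ ≤ MBv urn spec j := by rw [MBv]; exact add_le_add hb1 hb2

lemma MBv_nonneg (urn : UrnProcess d μ F R) (spec : UrnSpectral d R) (j : Fin d) :
    0 ≤ MBv urn spec j := by
  have h := YB_div_bound urn spec j 0
  have ht0 := tv_pos urn spec 0
  have hYB := YB_nonneg urn spec 0 j
  have : 0 ≤ YB urn spec 0 j / tv urn spec 0 := div_nonneg hYB (le_of_lt ht0)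
  linarith

lemma Ydivt_bound (urn : UrnProcess d μ F R) (spec : UrnSpectral d R) (j : Fin d)
    (n : ℕ) (ω : Ω) :
    |Yv urn spec n j ω / tv urn spec n| ≤ MBv urn spec j := by
  have htn := tv_pos urn spec n
  rw [abs_div, abs_of_pos htn]
  refine le_trans ?_ (YB_div_bound urn spec j n)
  gcongr
  exact Y_bound urn spec n j ω

lemma avdivt_bound (urn : UrnProcess d μ F R) (spec : UrnSpectral d R) (j : Fin d)
    (n : ℕ) : |av urn spec j n / tv urn spec n| ≤ MBv urn spec j := by
  have htn := tv_pos urn spec n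
  rw [abs_div, abs_of_pos htn]
  refine le_trans ?_ (YB_div_bound urn spec j n)
  gcongr
  exact av_abs urn spec n j

/-- the martingale-difference factor -/
lemma DW_bound (urn : UrnProcess d μ F R) (spec : UrnSpectral d R) (j : Fin d)
    (n : ℕ) (ω : Ω) :
    |Matrix.vecMul (urn.χ (n+1) ω) spec.U j - Yv urn spec n j ω / tv urn spec n|
      ≤ MUv spec j + MBv urn spec j := by
  calc |Matrix.vecMul (urn.χ (n+1) ω) spec.U j - Yv urn spec n j ω / tv urn spec n|
      ≤ |Matrix.vecMul (urn.χ (n+1) ω) spec.U j| + |Yv urn spec n j ω / tv urn spec n| :=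
        abs_sub'' _ _
    _ ≤ MUv spec j + MBv urn spec j :=
        add_le_add (chiU_bound urn spec n j ω) (Ydivt_bound urn spec j n ω)

lemma DW_aesm (urn : UrnProcess d μ F R) (spec : UrnSpectral d R) (j : Fin d) (n : ℕ) :
    AEStronglyMeasurable
      (fun ω => Matrix.vecMul (urn.χ (n+1) ω) spec.U j - Yv urn spec n j ω / tv urn spec n)
      μ :=
  (chiU_aesm urn spec n j).sub (aesm_div_const _ (Y_aesm urn spec n j) _)

lemma orth (urn : UrnProcess d μ F R) (spec : UrnSpectral d R) (j : Fin d) (n : ℕ) :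
    ∫ ω, Xv urn spec j n ω
        * (Matrix.vecMul (urn.χ (n+1) ω) spec.U j - Yv urn spec n j ω / tv urn spec n) ∂μ
      = 0 := by
  have hkey := key_integral urn spec n j (fun ω => Xv urn spec j n ω)
    (X_measF urn spec j n) (2 * YB urn spec n j) (X_bound urn spec j n)
  have hint1 : Integrable
      (fun ω => Xv urn spec j n ω * Matrix.vecMul (urn.χ (n+1) ω) spec.U j) μ :=
    bdd_meas_integrable2 _ _ (X_aesm urn spec j n) (chiU_aesm urn spec n j)
      _ _ (X_bound urn spec j n) (chiU_bound urn spec n j)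
  have hint2 : Integrable
      (fun ω => Xv urn spec j n ω * (Yv urn spec n j ω / tv urn spec n)) μ :=
    bdd_meas_integrable2 _ _ (X_aesm urn spec j n)
      (aesm_div_const _ (Y_aesm urn spec n j) _)
      _ _ (X_bound urn spec j n) (Ydivt_bound urn spec j n)
  have hsplit : ∫ ω, Xv urn spec j n ω
      * (Matrix.vecMul (urn.χ (n+1) ω) spec.U j - Yv urn spec n j ω / tv urn spec n) ∂μ
      = ∫ ω, Xv urn spec j n ω * Matrix.vecMul (urn.χ (n+1) ω) spec.U j ∂μ
        - ∫ ω, Xv urn spec j n ω * (Yv urn spec n j ω / tv urn spec n) ∂μ := by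
    rw [← integral_sub hint1 hint2]
    apply integral_congr_ae
    apply Eventually.of_forall
    intro ω
    show Xv urn spec j n ω * _ = _
    ring
  rw [hsplit, hkey, sub_self]

end Urn3

section Urn4
variable {d : ℕ} [NeZero d] {Ω : Type*} [mΩ : MeasurableSpace Ω]
  {μ : Measure Ω} [IsProbabilityMeasure μ] {F : Filtration ℕ mΩ}
  {R : Matrix (Fin d) (Fin d) ℝ}

/-- second moment of the centred process -/
def vv (urn : UrnProcess d μ F R) (spec : UrnSpectral d R) (j : Fin d) (n : ℕ) : ℝ :=
  ∫ ω, (Xv urn spec j n ω)^2 ∂μ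

lemma vv_nonneg (urn : UrnProcess d μ F R) (spec : UrnSpectral d R) (j : Fin d) (n : ℕ) :
    0 ≤ vv urn spec j n := integral_nonneg fun ω => sq_nonneg _

lemma vv_zero (urn : UrnProcess d μ F R) (spec : UrnSpectral d R) (j : Fin d) :
    vv urn spec j 0 = 0 := by
  have h : (fun ω => (Xv urn spec j 0 ω)^2) = fun _ω => (0:ℝ) := by
    funext ω
    rw [X_zero urn spec j ω]
    norm_num
  rw [vv, h, integral_zero]

lemma X_rec (urn : UrnProcess d μ F R) (spec : UrnSpectral d R) (j : Fin d) (n : ℕ)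
    (ω : Ω) : Xv urn spec j (n+1) ω
      = Xv urn spec j n ω * (1 + spec.lam j / tv urn spec n)
        + spec.lam j * (Matrix.vecMul (urn.χ (n+1) ω) spec.U j
            - Yv urn spec n j ω / tv urn spec n) := by
  have h1 := Y_succ urn spec n j ω
  have h2 := av_rec urn spec j n
  have htpos := tv_pos urn spec n
  simp only [Xv]
  rw [h1, h2]
  field_simp
  ring

lemma DW_sq_int (urn : UrnProcess d μ F R) (spec : UrnSpectral d R) (j : Fin d) (n : ℕ) :
    Integrable (fun ω => (Matrix.vecMul (urn.χ (n+1) ω) spec.U j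
        - Yv urn spec n j ω / tv urn spec n)^2) μ := by
  have h := bdd_meas_integrable2 _ _ (DW_aesm urn spec j n) (DW_aesm urn spec j n)
    _ _ (DW_bound urn spec j n) (DW_bound urn spec j n)
  exact h.congr (Eventually.of_forall fun ω => by
    show (Matrix.vecMul (urn.χ (n+1) ω) spec.U j - Yv urn spec n j ω / tv urn spec n)
        * (Matrix.vecMul (urn.χ (n+1) ω) spec.U j - Yv urn spec n j ω / tv urn spec n)
      = (Matrix.vecMul (urn.χ (n+1) ω) spec.U j - Yv urn spec n j ω / tv urn spec n)^2
    rw [sq])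

lemma XDW_int (urn : UrnProcess d μ F R) (spec : UrnSpectral d R) (j : Fin d) (n : ℕ) :
    Integrable (fun ω => Xv urn spec j n ω * (Matrix.vecMul (urn.χ (n+1) ω) spec.U j
        - Yv urn spec n j ω / tv urn spec n)) μ :=
  bdd_meas_integrable2 _ _ (X_aesm urn spec j n) (DW_aesm urn spec j n)
    _ _ (X_bound urn spec j n) (DW_bound urn spec j n)

lemma vv_rec (urn : UrnProcess d μ F R) (spec : UrnSpectral d R) (j : Fin d) (n : ℕ) :
    vv urn spec j (n+1) ≤ (1 + spec.lam j / tv urn spec n)^2 * vv urn spec j n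
      + (spec.lam j)^2 * (MUv spec j + MBv urn spec j)^2 := by
  have hiX2 := X_sq_int urn spec j n
  have hiXD := XDW_int urn spec j n
  have hiD2 := DW_sq_int urn spec j n
  have hsplit : (fun ω => (Xv urn spec j (n+1) ω)^2)
      = fun ω => (1 + spec.lam j / tv urn spec n)^2 * (Xv urn spec j n ω)^2
          + ((2 * (1 + spec.lam j / tv urn spec n) * spec.lam j)
              * (Xv urn spec j n ω * (Matrix.vecMul (urn.χ (n+1) ω) spec.U j
                  - Yv urn spec n j ω / tv urn spec n))
            + (spec.lam j)^2 * (Matrix.vecMul (urn.χ (n+1) ω) spec.U j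
                  - Yv urn spec n j ω / tv urn spec n)^2) := by
    funext ω
    rw [X_rec urn spec j n ω]
    ring
  have t1 : ∫ ω, ((1 + spec.lam j / tv urn spec n)^2 * (Xv urn spec j n ω)^2
        + (2 * (1 + spec.lam j / tv urn spec n) * spec.lam j
            * (Xv urn spec j n ω * (Matrix.vecMul (urn.χ (n+1) ω) spec.U j
                - Yv urn spec n j ω / tv urn spec n))
          + (spec.lam j)^2 * (Matrix.vecMul (urn.χ (n+1) ω) spec.U j
                - Yv urn spec n j ω / tv urn spec n)^2)) ∂μ
      = (∫ ω, (1 + spec.lam j / tv urn spec n)^2 * (Xv urn spec j n ω)^2 ∂μ)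
        + ∫ ω, (2 * (1 + spec.lam j / tv urn spec n) * spec.lam j
            * (Xv urn spec j n ω * (Matrix.vecMul (urn.χ (n+1) ω) spec.U j
                - Yv urn spec n j ω / tv urn spec n))
          + (spec.lam j)^2 * (Matrix.vecMul (urn.χ (n+1) ω) spec.U j
                - Yv urn spec n j ω / tv urn spec n)^2) ∂μ :=
    integral_add (hiX2.const_mul _) ((hiXD.const_mul _).add (hiD2.const_mul _))
  have t2 : ∫ ω, (2 * (1 + spec.lam j / tv urn spec n) * spec.lam j
            * (Xv urn spec j n ω * (Matrix.vecMul (urn.χ (n+1) ω) spec.U j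
                - Yv urn spec n j ω / tv urn spec n))
          + (spec.lam j)^2 * (Matrix.vecMul (urn.χ (n+1) ω) spec.U j
                - Yv urn spec n j ω / tv urn spec n)^2) ∂μ
      = (∫ ω, 2 * (1 + spec.lam j / tv urn spec n) * spec.lam j
            * (Xv urn spec j n ω * (Matrix.vecMul (urn.χ (n+1) ω) spec.U j
                - Yv urn spec n j ω / tv urn spec n)) ∂μ)
        + ∫ ω, (spec.lam j)^2 * (Matrix.vecMul (urn.χ (n+1) ω) spec.U j
                - Yv urn spec n j ω / tv urn spec n)^2 ∂μ :=
    integral_add (hiXD.const_mul _) (hiD2.const_mul _)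
  have t3 : ∫ ω, (1 + spec.lam j / tv urn spec n)^2 * (Xv urn spec j n ω)^2 ∂μ
      = (1 + spec.lam j / tv urn spec n)^2 * vv urn spec j n :=
    integral_const_mul _ _
  have t4 : ∫ ω, 2 * (1 + spec.lam j / tv urn spec n) * spec.lam j
            * (Xv urn spec j n ω * (Matrix.vecMul (urn.χ (n+1) ω) spec.U j
                - Yv urn spec n j ω / tv urn spec n)) ∂μ
      = 2 * (1 + spec.lam j / tv urn spec n) * spec.lam j
          * ∫ ω, Xv urn spec j n ω * (Matrix.vecMul (urn.χ (n+1) ω) spec.U j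
                - Yv urn spec n j ω / tv urn spec n) ∂μ :=
    integral_const_mul _ _
  have t5 : ∫ ω, (spec.lam j)^2 * (Matrix.vecMul (urn.χ (n+1) ω) spec.U j
                - Yv urn spec n j ω / tv urn spec n)^2 ∂μ
      = (spec.lam j)^2 * ∫ ω, (Matrix.vecMul (urn.χ (n+1) ω) spec.U j
                - Yv urn spec n j ω / tv urn spec n)^2 ∂μ :=
    integral_const_mul _ _
  have hIeq : vv urn spec j (n+1)
      = (1 + spec.lam j / tv urn spec n)^2 * vv urn spec j n
        + (spec.lam j)^2 * ∫ ω, (Matrix.vecMul (urn.χ (n+1) ω) spec.U j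
            - Yv urn spec n j ω / tv urn spec n)^2 ∂μ := by
    rw [vv, hsplit, t1, t2, t3, t4, t5, orth urn spec j n]
    ring
  have hD2le : ∫ ω, (Matrix.vecMul (urn.χ (n+1) ω) spec.U j
      - Yv urn spec n j ω / tv urn spec n)^2 ∂μ ≤ (MUv spec j + MBv urn spec j)^2 := by
    have hmono : ∫ ω, (Matrix.vecMul (urn.χ (n+1) ω) spec.U j
        - Yv urn spec n j ω / tv urn spec n)^2 ∂μ
        ≤ ∫ _ω, (MUv spec j + MBv urn spec j)^2 ∂μ := by
      apply integral_mono hiD2 (integrable_const _)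
      intro ω
      have h := DW_bound urn spec j n ω
      have h2 := abs_le.1 h
      exact sq_le_sq' h2.1 h2.2
    simpa [integral_const] using hmono
  rw [hIeq]
  have hfac : (0:ℝ) ≤ (spec.lam j)^2 := sq_nonneg _
  have h := mul_le_mul_of_nonneg_left hD2le hfac
  linarith

lemma tv_tendsto (urn : UrnProcess d μ F R) (spec : UrnSpectral d R) :
    Tendsto (tv urn spec) atTop atTop := by
  have h : Tendsto (fun n : ℕ => (∑ i, urn.C0 i) + (n:ℝ) * spec.lam 0) atTop atTop :=
    tendsto_atTop_add_const_left _ _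
      (tendsto_natCast_atTop_atTop.atTop_mul_const spec.s_pos)
  exact h.congr fun n => rfl

lemma q_lim (urn : UrnProcess d μ F R) (spec : UrnSpectral d R) (j : Fin d) :
    Tendsto (fun n : ℕ => ((1 + spec.lam j / tv urn spec n)^2 - 1) * ((n:ℝ)+1)) atTop
      (𝓝 (2 * spec.lam j / spec.lam 0)) := by
  have htt := tv_tendsto urn spec
  have hs := spec.s_pos
  have h1 : Tendsto (fun n : ℕ => 2*spec.lam j + (spec.lam j)^2 / tv urn spec n)
      atTop (𝓝 (2*spec.lam j)) := by
    have h := (tendsto_const_nhds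
      (x := 2*spec.lam j) (f := atTop (α := ℕ))).add
      ((tendsto_const_nhds (x := (spec.lam j)^2)).div_atTop htt)
    simpa using h
  have h2 : Tendsto (fun n : ℕ => ((n:ℝ)+1) / tv urn spec n) atTop (𝓝 (1/spec.lam 0)) := by
    have hinner : Tendsto (fun n : ℕ => 1 + (spec.lam 0 - tv urn spec 0)/tv urn spec n)
        atTop (𝓝 1) := by
      have h := (tendsto_const_nhds (x := (1:ℝ)) (f := atTop (α := ℕ))).add
        ((tendsto_const_nhds (x := spec.lam 0 - tv urn spec 0)).div_atTop htt)
      simpa using h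
    have heq : ∀ n : ℕ, (1/spec.lam 0) * (1 + (spec.lam 0 - tv urn spec 0)/tv urn spec n)
        = ((n:ℝ)+1)/tv urn spec n := by
      intro n
      have htn := tv_pos urn spec n
      have h0 : tv urn spec n = tv urn spec 0 + n * spec.lam 0 := by
        simp only [tv]; push_cast; ring
      field_simp
      rw [h0]
      ring
    have h := hinner.const_mul (1/spec.lam 0)
    rw [mul_one] at h
    exact h.congr heq
  have heq2 : ∀ n : ℕ, (2*spec.lam j + (spec.lam j)^2 / tv urn spec n)
      * (((n:ℝ)+1)/tv urn spec n)
      = ((1 + spec.lam j / tv urn spec n)^2 - 1) * ((n:ℝ)+1) := by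
    intro n
    have htn := tv_pos urn spec n
    field_simp
    ring
  have h := h1.mul h2
  rw [show 2*spec.lam j * (1/spec.lam 0) = 2*spec.lam j/spec.lam 0 by ring] at h
  exact h.congr heq2

lemma X_inc (urn : UrnProcess d μ F R) (spec : UrnSpectral d R) (j : Fin d) (n : ℕ)
    (ω : Ω) : |Xv urn spec j (n+1) ω - Xv urn spec j n ω|
      ≤ |spec.lam j| * MUv spec j + |spec.lam j| * MBv urn spec j := by
  have h1 := Y_succ urn spec n j ω
  have h2 := av_rec urn spec j n
  have heq : Xv urn spec j (n+1) ω - Xv urn spec j n ω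
      = spec.lam j * Matrix.vecMul (urn.χ (n+1) ω) spec.U j
        - spec.lam j * (av urn spec j n / tv urn spec n) := by
    simp only [Xv]
    rw [h1, h2]
    ring
  rw [heq]
  calc |spec.lam j * Matrix.vecMul (urn.χ (n+1) ω) spec.U j
      - spec.lam j * (av urn spec j n / tv urn spec n)|
      ≤ |spec.lam j * Matrix.vecMul (urn.χ (n+1) ω) spec.U j|
        + |spec.lam j * (av urn spec j n / tv urn spec n)| := abs_sub'' _ _
    _ ≤ |spec.lam j| * MUv spec j + |spec.lam j| * MBv urn spec j := by
        rw [abs_mul, abs_mul]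
        exact add_le_add
          (mul_le_mul_of_nonneg_left (chiU_bound urn spec n j ω) (abs_nonneg _))
          (mul_le_mul_of_nonneg_left (avdivt_bound urn spec j n) (abs_nonneg _))

lemma X_tendsto (urn : UrnProcess d μ F R) (spec : UrnSpectral d R) (j : Fin d)
    (hj : j ≠ 0) :
    ∀ᵐ ω ∂μ, Tendsto (fun n : ℕ => Xv urn spec j n ω / n) atTop (𝓝 0) := by
  have hs := spec.s_pos
  have hsm := spec.small j hj
  have hL : 2 * spec.lam j / spec.lam 0 < 1 := by
    rw [div_lt_one hs]; exact hsm
  obtain ⟨B, hB0, hBb⟩ := var_growth (vv urn spec j)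
    (fun n => (1 + spec.lam j / tv urn spec n)^2)
    ((spec.lam j)^2 * (MUv spec j + MBv urn spec j)^2) (by positivity)
    (vv_zero urn spec j) (fun n => vv_nonneg urn spec j n) (fun n => sq_nonneg _)
    (fun n => vv_rec urn spec j n) _ hL (q_lim urn spec j)
  have hae := cheb_bc μ (fun n ω => Xv urn spec j n ω) (fun n => X_sq_int urn spec j n)
    B hB0 (fun n => hBb n)
  filter_upwards [hae] with ω hω
  exact interp (fun n => Xv urn spec j n ω) _ (fun n => X_inc urn spec j n ω) hω

lemma a_decay (urn : UrnProcess d μ F R) (spec : UrnSpectral d R) (j : Fin d)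
    (hj : j ≠ 0) : Tendsto (fun n : ℕ => av urn spec j n / n) atTop (𝓝 0) :=
  mean_decay (av urn spec j) (tv urn spec) (spec.lam j) (spec.lam 0) (∑ i, urn.C0 i)
    (fun n => rfl) urn.t0_pos spec.s_pos (spec.small j hj)
    (fun n => av_rec urn spec j n)

lemma av_col0 (urn : UrnProcess d μ F R) (spec : UrnSpectral d R) (n : ℕ) :
    av urn spec 0 n = tv urn spec n := by
  rw [av, integral_congr_ae (Eventually.of_forall fun ω => Y_col0 urn spec n ω)]
  simp [integral_const]

end Urn4

end UrnAux

/-- **Almost sure vanishing of the centred process** (proof of Theorem 1).  With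
`Y n = C n * U`, one has `n⁻¹ (Y n − E[Y n]) → 0` almost surely, and consequently
`n⁻¹ Y n → s e₁` almost surely. -/


theorem urn_centred_process_vanishes_ae {d : ℕ} [NeZero d] (hd : 2 ≤ d)
    {Ω : Type*} [mΩ : MeasurableSpace Ω] (μ : Measure Ω) [IsProbabilityMeasure μ]
    (F : Filtration ℕ mΩ) (R : Matrix (Fin d) (Fin d) ℝ)
    (urn : UrnProcess d μ F R) (spec : UrnSpectral d R) :
    (∀ᵐ ω ∂μ, Tendsto (fun n : ℕ => fun j : Fin d =>
          (Matrix.vecMul (urn.C n ω) spec.U j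
              - ∫ ω', Matrix.vecMul (urn.C n ω') spec.U j ∂μ) / n)
        atTop (𝓝 0))
    ∧ ∀ᵐ ω ∂μ, Tendsto (fun n : ℕ => fun j : Fin d =>
          Matrix.vecMul (urn.C n ω) spec.U j / n)
        atTop (𝓝 (fun j : Fin d => if j = 0 then spec.lam 0 else 0)) := by
  classical
  constructor
  · have hj : ∀ j : Fin d, ∀ᵐ ω ∂μ, Tendsto
        (fun n : ℕ => (UrnAux.Yv urn spec n j ω - UrnAux.av urn spec j n) / n) atTop (𝓝 0) := by
      intro j
      by_cases hj0 : j = 0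
      · subst hj0
        refine Eventually.of_forall fun ω => ?_
        have h : (fun n : ℕ => (UrnAux.Yv urn spec n 0 ω - UrnAux.av urn spec 0 n) / n)
            = fun _n : ℕ => (0:ℝ) := by
          funext n
          rw [UrnAux.Y_col0 urn spec n ω, UrnAux.av_col0 urn spec n, sub_self, zero_div]
        rw [h]
        exact tendsto_const_nhds
      · filter_upwards [UrnAux.X_tendsto urn spec j hj0] with ω h
        exact h
    filter_upwards [ae_all_iff.2 hj] with ω hω
    rw [tendsto_pi_nhds]
    intro j
    simp only [Pi.zero_apply]
    exact hω j
  · have hj : ∀ j : Fin d, ∀ᵐ ω ∂μ, Tendsto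
        (fun n : ℕ => UrnAux.Yv urn spec n j ω / n) atTop
        (𝓝 (if j = 0 then spec.lam 0 else 0)) := by
      intro j
      by_cases hj0 : j = 0
      · subst hj0
        simp only [if_pos rfl]
        refine Eventually.of_forall fun ω => ?_
        have heq : ∀ᶠ n : ℕ in atTop,
            (∑ i, urn.C0 i) / n + spec.lam 0 = UrnAux.Yv urn spec n 0 ω / n := by
          filter_upwards [eventually_ge_atTop 1] with n hn
          have hnpos : (0:ℝ) < n := by exact_mod_cast hn
          rw [UrnAux.Y_col0 urn spec n ω]
          simp only [UrnAux.tv]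
          field_simp
        have h0 : Tendsto (fun n : ℕ => (∑ i, urn.C0 i) / n + spec.lam 0)
            atTop (𝓝 (spec.lam 0)) := by
          have h := ((tendsto_const_nhds (x := ∑ i, urn.C0 i)
            (f := atTop (α := ℕ))).div_atTop
              tendsto_natCast_atTop_atTop).add
            (tendsto_const_nhds (x := spec.lam 0) (f := atTop (α := ℕ)))
          simpa using h
        exact h0.congr' heq
      · simp only [if_neg hj0]
        filter_upwards [UrnAux.X_tendsto urn spec j hj0] with ω h
        have hsum := h.add (UrnAux.a_decay urn spec j hj0)
        rw [add_zero] at hsum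
        refine hsum.congr fun n => ?_
        simp only [UrnAux.Xv]
        ring
    filter_upwards [ae_all_iff.2 hj] with ω hω
    rw [tendsto_pi_nhds]
    intro j
    exact hω j
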